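/- arXiv:1411.1182 — 7 statements merged into one kernel-verified Lean document; each statement's English description precedes it below -/
import Mathlib

section
/- Let I ⊆ ℝ be an open interval and let u : ℝ → ℂ be twice differentiable on I satisfying the complex modified Emden equation u″(x) + 3·u(x)·u′(x) + u(x)³ = 0 for all x ∈ I. Assume u(x)² + u′(x) ≠ 0 for all x ∈ I. Then the function x ↦ x − u(x)/(u(x)² + u′(x)) is constant on I. -/
/-- First integral of the complex modified Emden equation:
`x ↦ x - u/(u² + u')` is constant along solutions. -/
theorem stmt_4 (I : Set ℝ) (hIopen : IsOpen I) (hIint : I.OrdConnected)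
    (u : ℝ → ℂ)
    (hu : ∀ x ∈ I, DifferentiableAt ℝ u x)
    (hu' : ∀ x ∈ I, DifferentiableAt ℝ (deriv u) x)
    (hode : ∀ x ∈ I, deriv (deriv u) x + 3 * u x * deriv u x + (u x) ^ 3 = 0)
    (hne : ∀ x ∈ I, (u x) ^ 2 + deriv u x ≠ 0) :
    ∃ C : ℂ, ∀ x ∈ I, (x : ℂ) - u x / ((u x) ^ 2 + deriv u x) = C := by
  rcases I.eq_empty_or_nonempty with h | ⟨x₀, hx₀⟩
  · exact ⟨0, fun x hx => by simp [h] at hx⟩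
  set f : ℝ → ℂ := fun x => (x : ℂ) - u x / ((u x) ^ 2 + deriv u x) with hf
  have key : ∀ x ∈ I, HasDerivAt f 0 x := by
    intro x hx
    have hU : HasDerivAt u (deriv u x) x := (hu x hx).hasDerivAt
    have hU' : HasDerivAt (deriv u) (deriv (deriv u) x) x := (hu' x hx).hasDerivAt
    have hg : HasDerivAt (fun y => (u y) ^ 2 + deriv u y)
        (2 * u x * deriv u x + deriv (deriv u) x) x := by
      have h2 : HasDerivAt (fun y => u y * u y + deriv u y)
          (deriv u x * u x + u x * deriv u x + deriv (deriv u) x) x :=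
        (hU.mul hU).add hU'
      simp only [pow_two]
      convert h2 using 1
      ring
    have hq : HasDerivAt (fun y => u y / ((u y) ^ 2 + deriv u y))
        ((deriv u x * ((u x) ^ 2 + deriv u x) - u x * (2 * u x * deriv u x + deriv (deriv u) x))
          / ((u x) ^ 2 + deriv u x) ^ 2) x := hU.div hg (hne x hx)
    have hid : HasDerivAt (fun y : ℝ => (y : ℂ)) 1 x := by
      simpa using (hasDerivAt_id x).ofReal_comp
    have h := hid.sub hq
    have hdd : deriv (deriv u) x = -(3 * u x * deriv u x) - (u x) ^ 3 := by
      have := hode x hx; linear_combination this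
    refine h.congr_deriv ?_
    rw [hdd]
    have hnz := hne x hx
    field_simp
    ring
  have hconv : Convex ℝ I := by
    rw [convex_iff_ordConnected]; exact hIint
  refine ⟨f x₀, fun x hx => ?_⟩
  exact hconv.is_const_of_fderivWithin_eq_zero
    (fun y hy => ((key y hy).differentiableAt).differentiableWithinAt)
    (fun y hy => by
      rw [fderivWithin_of_isOpen hIopen hy, (key y hy).hasFDerivAt.fderiv]
      ext; simp) hx hx₀
end

section
/- Let a, c ∈ ℂ and let I ⊆ ℝ be an open interval such that x² − 2·a·x + c ≠ 0 (as a complex number) for all x ∈ I. Then the function u : ℝ → ℂ defined by u(x) = 2(x − a)/(x² − 2·a·x + c) satisfies the complex modified Emden equation u″(x) + 3·u(x)·u′(x) + u(x)³ = 0 for all x ∈ I. -/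
private lemma hxC (x : ℝ) : HasDerivAt (fun t : ℝ => (t : ℂ)) 1 x := by
  exact Complex.ofRealCLM.hasDerivAt (x := x)

private lemma hqC (a c : ℂ) (x : ℝ) :
    HasDerivAt (fun t : ℝ => (t : ℂ) ^ 2 - 2 * a * (t : ℂ) + c)
      (2 * (x : ℂ) - 2 * a) x := by
  have h1 : HasDerivAt (fun t : ℝ => (t : ℂ) ^ 2) (2 * (x : ℂ)) x := by
    have h2 : HasDerivAt (fun t : ℝ => (t : ℂ) * (t : ℂ)) (1 * x + x * 1) x :=
      (hxC x).mul (hxC x)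
    simpa [pow_two, two_mul] using h2
  have h2 : HasDerivAt (fun t : ℝ => 2 * a * (t : ℂ)) (2 * a) x := by
    simpa using (hxC x).const_mul (2 * a)
  simpa using (h1.sub h2).add_const c

private lemma hnC (a : ℂ) (x : ℝ) :
    HasDerivAt (fun t : ℝ => 2 * ((t : ℂ) - a)) 2 x := by
  have h := ((hxC x).sub_const a).const_mul 2
  simpa using h

/-- The explicit two-parameter family `u(x) = 2(x-a)/(x² - 2ax + c)` solves the
complex modified Emden equation `u'' + 3uu' + u³ = 0`. -/
theorem stmt_5 (a c : ℂ) (I : Set ℝ) (hIopen : IsOpen I) (hIint : I.OrdConnected)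
    (hne : ∀ x ∈ I, (x : ℂ) ^ 2 - 2 * a * (x : ℂ) + c ≠ 0)
    (u : ℝ → ℂ)
    (hu : ∀ x : ℝ, u x = 2 * ((x : ℂ) - a) / ((x : ℂ) ^ 2 - 2 * a * (x : ℂ) + c)) :
    ∀ x ∈ I, deriv (deriv u) x + 3 * u x * deriv u x + (u x) ^ 3 = 0 := by
  have hu' : u = fun x : ℝ => 2 * ((x : ℂ) - a) / ((x : ℂ) ^ 2 - 2 * a * (x : ℂ) + c) :=
    funext hu
  subst hu'
  set v : ℝ → ℂ := fun t =>
      (2 * ((t : ℂ) ^ 2 - 2 * a * (t : ℂ) + c) -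
        2 * ((t : ℂ) - a) * (2 * (t : ℂ) - 2 * a)) /
      ((t : ℂ) ^ 2 - 2 * a * (t : ℂ) + c) ^ 2 with hvdef
  have hderivu : ∀ y ∈ I, HasDerivAt
      (fun x : ℝ => 2 * ((x : ℂ) - a) / ((x : ℂ) ^ 2 - 2 * a * (x : ℂ) + c)) (v y) y := by
    intro y hy
    have h := (hnC a y).div (hqC a c y) (hne y hy)
    exact h
  have hdu : ∀ y ∈ I, deriv
      (fun x : ℝ => 2 * ((x : ℂ) - a) / ((x : ℂ) ^ 2 - 2 * a * (x : ℂ) + c)) y = v y :=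
    fun y hy => (hderivu y hy).deriv
  intro x hx
  have hq0 : (x : ℂ) ^ 2 - 2 * a * (x : ℂ) + c ≠ 0 := hne x hx
  -- derivative of the numerator of v
  have hnum : HasDerivAt (fun t : ℝ => 2 * ((t : ℂ) ^ 2 - 2 * a * (t : ℂ) + c) -
        2 * ((t : ℂ) - a) * (2 * (t : ℂ) - 2 * a))
      (2 * (2 * (x : ℂ) - 2 * a) -
        (2 * (2 * (x : ℂ) - 2 * a) + 2 * ((x : ℂ) - a) * 2)) x := by
    have h1 := (hqC a c x).const_mul 2
    have hlin : HasDerivAt (fun t : ℝ => 2 * (t : ℂ) - 2 * a) 2 x := by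
      simpa using ((hxC x).const_mul 2).sub_const (2 * a)
    have h2 := (hnC a x).mul hlin
    exact h1.sub h2
  have hden : HasDerivAt (fun t : ℝ => ((t : ℂ) ^ 2 - 2 * a * (t : ℂ) + c) ^ 2)
      (2 * ((x : ℂ) ^ 2 - 2 * a * (x : ℂ) + c) * (2 * (x : ℂ) - 2 * a)) x := by
    have h := (hqC a c x).mul (hqC a c x)
    have h2 : HasDerivAt (fun t : ℝ => ((t : ℂ) ^ 2 - 2 * a * (t : ℂ) + c) *
        ((t : ℂ) ^ 2 - 2 * a * (t : ℂ) + c)) _ x := h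
    simp only [← pow_two] at h2
    convert h2 using 1
    ring
  have hq20 : ((x : ℂ) ^ 2 - 2 * a * (x : ℂ) + c) ^ 2 ≠ 0 := pow_ne_zero _ hq0
  have hdv : HasDerivAt v
      (((2 * (2 * (x : ℂ) - 2 * a) - (2 * (2 * (x : ℂ) - 2 * a) + 2 * ((x : ℂ) - a) * 2)) *
          ((x : ℂ) ^ 2 - 2 * a * (x : ℂ) + c) ^ 2 -
        (2 * ((x : ℂ) ^ 2 - 2 * a * (x : ℂ) + c) -
          2 * ((x : ℂ) - a) * (2 * (x : ℂ) - 2 * a)) *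
          (2 * ((x : ℂ) ^ 2 - 2 * a * (x : ℂ) + c) * (2 * (x : ℂ) - 2 * a))) /
        (((x : ℂ) ^ 2 - 2 * a * (x : ℂ) + c) ^ 2) ^ 2) x := by
    rw [hvdef]
    exact hnum.div hden hq20
  have hEq : deriv (fun x : ℝ => 2 * ((x : ℂ) - a) / ((x : ℂ) ^ 2 - 2 * a * (x : ℂ) + c))
      =ᶠ[nhds x] v := by
    filter_upwards [hIopen.mem_nhds hx] with y hy using hdu y hy
  rw [hEq.deriv_eq, hdv.deriv, hdu x hx, hvdef]
  field_simp
  ring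
end

section
/- Let a₁, a₂, b₁, b₂ ∈ ℝ, define D(x) = x⁴ − 4a₁x³ + 4((a₂² + a₁² − b₁)x² + 2(a₂b₂ + a₁b₁)x + b₁² + b₂²), and let I ⊆ ℝ be an open interval on which D(x) ≠ 0. Define f₁(x) = (2x³ − 6a₁x² + 4(a₂² + a₁² − b₁)x + 4a₁b₁ + 4a₂b₂)/D(x) and f₂(x) = ((2x² + 4b₁)a₂ + 4b₂(x − a₁))/D(x). Then for all x ∈ I the pair (f₁, f₂) satisfies the coupled modified Emden system f₁″ = −3f₁f₁′ + 3f₂f₂′ − f₁³ + 3f₁f₂² and f₂″ = −3f₂f₁′ − 3f₁f₂′ + f₂³ − 3f₁²f₂. -/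
/-- A quartic polynomial hasDerivAt its formal derivative. -/
lemma quartic_hasDerivAt (f : ℝ → ℝ) (c0 c1 c2 c3 c4 d x : ℝ)
    (hf : ∀ y, f y = c0 + c1 * y + c2 * y ^ 2 + c3 * y ^ 3 + c4 * y ^ 4)
    (hd : d = c1 + 2 * c2 * x + 3 * c3 * x ^ 2 + 4 * c4 * x ^ 3) :
    HasDerivAt f d x := by
  have h : HasDerivAt (fun y : ℝ => c0 + c1 * y + c2 * y ^ 2 + c3 * y ^ 3 + c4 * y ^ 4)
      (0 + c1 * 1 + c2 * (↑2 * x ^ 1) + c3 * (↑3 * x ^ 2) + c4 * (↑4 * x ^ 3)) x := by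
    exact ((((hasDerivAt_const x c0).add ((hasDerivAt_id x).const_mul c1)).add
      ((hasDerivAt_pow 2 x).const_mul c2)).add ((hasDerivAt_pow 3 x).const_mul c3)).add
      ((hasDerivAt_pow 4 x).const_mul c4)
  have h' : HasDerivAt (fun y : ℝ => c0 + c1 * y + c2 * y ^ 2 + c3 * y ^ 3 + c4 * y ^ 4) d x := by
    convert h using 1
    rw [hd]; ring
  exact h'.congr_of_eventuallyEq (Filter.Eventually.of_forall hf)

set_option maxHeartbeats 2000000 in
/-- The explicit four-parameter solution of the coupled modified Emden system (sys7). -/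
theorem stmt_7 (a₁ a₂ b₁ b₂ : ℝ) (D f₁ f₂ : ℝ → ℝ)
    (hD : ∀ x : ℝ, D x =
      x ^ 4 - 4 * a₁ * x ^ 3 +
        4 * ((a₂ ^ 2 + a₁ ^ 2 - b₁) * x ^ 2 + 2 * (a₂ * b₂ + a₁ * b₁) * x + b₁ ^ 2 + b₂ ^ 2))
    (I : Set ℝ) (hIopen : IsOpen I) (hIint : I.OrdConnected)
    (hne : ∀ x ∈ I, D x ≠ 0)
    (hf₁ : ∀ x : ℝ, f₁ x =
      (2 * x ^ 3 - 6 * a₁ * x ^ 2 + 4 * (a₂ ^ 2 + a₁ ^ 2 - b₁) * x + 4 * a₁ * b₁ + 4 * a₂ * b₂) / D x)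
    (hf₂ : ∀ x : ℝ, f₂ x = ((2 * x ^ 2 + 4 * b₁) * a₂ + 4 * b₂ * (x - a₁)) / D x) :
    ∀ x ∈ I,
      deriv (deriv f₁) x =
        -3 * f₁ x * deriv f₁ x + 3 * f₂ x * deriv f₂ x - (f₁ x) ^ 3 + 3 * f₁ x * (f₂ x) ^ 2 ∧
      deriv (deriv f₂) x =
        -3 * f₂ x * deriv f₁ x - 3 * f₁ x * deriv f₂ x + (f₂ x) ^ 3 - 3 * (f₁ x) ^ 2 * f₂ x := by
  -- polynomial pieces
  set N10 : ℝ → ℝ := fun x =>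
    2 * x ^ 3 - 6 * a₁ * x ^ 2 + 4 * (a₂ ^ 2 + a₁ ^ 2 - b₁) * x + 4 * a₁ * b₁ + 4 * a₂ * b₂ with hN10
  set N11 : ℝ → ℝ := fun x => 6 * x ^ 2 - 12 * a₁ * x + 4 * (a₂ ^ 2 + a₁ ^ 2 - b₁) with hN11
  set N12 : ℝ → ℝ := fun x => 12 * x - 12 * a₁ with hN12
  set N20 : ℝ → ℝ := fun x => (2 * x ^ 2 + 4 * b₁) * a₂ + 4 * b₂ * (x - a₁) with hN20
  set N21 : ℝ → ℝ := fun x => 4 * a₂ * x + 4 * b₂ with hN21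
  set N22 : ℝ → ℝ := fun x => 4 * a₂ with hN22
  set D1 : ℝ → ℝ := fun x =>
    4 * x ^ 3 - 12 * a₁ * x ^ 2 + 8 * (a₂ ^ 2 + a₁ ^ 2 - b₁) * x + 8 * (a₂ * b₂ + a₁ * b₁) with hD1
  set D2 : ℝ → ℝ := fun x => 12 * x ^ 2 - 24 * a₁ * x + 8 * (a₂ ^ 2 + a₁ ^ 2 - b₁) with hD2
  -- derivative facts
  have hDd : ∀ y : ℝ, HasDerivAt D (D1 y) y := fun y =>
    quartic_hasDerivAt D (4 * (b₁ ^ 2 + b₂ ^ 2)) (8 * (a₂ * b₂ + a₁ * b₁))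
      (4 * (a₂ ^ 2 + a₁ ^ 2 - b₁)) (-(4 * a₁)) 1 (D1 y) y
      (fun t => by rw [hD]; ring) (by simp only [hD1]; ring)
  have hD1d : ∀ y : ℝ, HasDerivAt D1 (D2 y) y := fun y =>
    quartic_hasDerivAt D1 (8 * (a₂ * b₂ + a₁ * b₁)) (8 * (a₂ ^ 2 + a₁ ^ 2 - b₁)) (-(12 * a₁)) 4 0
      (D2 y) y (fun t => by first | (simp only [hN10,hN11,hN12,hN20,hN21,hN22,hD1,hD2]; ring) | ring) (by first | (simp only [hN10,hN11,hN12,hN20,hN21,hN22,hD1,hD2]; ring) | ring)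
  have hN10d : ∀ y : ℝ, HasDerivAt N10 (N11 y) y := fun y =>
    quartic_hasDerivAt N10 (4 * a₁ * b₁ + 4 * a₂ * b₂) (4 * (a₂ ^ 2 + a₁ ^ 2 - b₁)) (-(6 * a₁)) 2 0
      (N11 y) y (fun t => by first | (simp only [hN10,hN11,hN12,hN20,hN21,hN22,hD1,hD2]; ring) | ring) (by first | (simp only [hN10,hN11,hN12,hN20,hN21,hN22,hD1,hD2]; ring) | ring)
  have hN11d : ∀ y : ℝ, HasDerivAt N11 (N12 y) y := fun y =>
    quartic_hasDerivAt N11 (4 * (a₂ ^ 2 + a₁ ^ 2 - b₁)) (-(12 * a₁)) 6 0 0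
      (N12 y) y (fun t => by first | (simp only [hN10,hN11,hN12,hN20,hN21,hN22,hD1,hD2]; ring) | ring) (by first | (simp only [hN10,hN11,hN12,hN20,hN21,hN22,hD1,hD2]; ring) | ring)
  have hN20d : ∀ y : ℝ, HasDerivAt N20 (N21 y) y := fun y =>
    quartic_hasDerivAt N20 (4 * b₁ * a₂ - 4 * b₂ * a₁) (4 * b₂) (2 * a₂) 0 0
      (N21 y) y (fun t => by first | (simp only [hN10,hN11,hN12,hN20,hN21,hN22,hD1,hD2]; ring) | ring) (by first | (simp only [hN10,hN11,hN12,hN20,hN21,hN22,hD1,hD2]; ring) | ring)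
  have hN21d : ∀ y : ℝ, HasDerivAt N21 (N22 y) y := fun y =>
    quartic_hasDerivAt N21 (4 * b₂) (4 * a₂) 0 0 0
      (N22 y) y (fun t => by first | (simp only [hN10,hN11,hN12,hN20,hN21,hN22,hD1,hD2]; ring) | ring) (by first | (simp only [hN10,hN11,hN12,hN20,hN21,hN22,hD1,hD2]; ring) | ring)
  -- first derivatives of f₁, f₂ on I
  set G1 : ℝ → ℝ := fun y => (N11 y * D y - N10 y * D1 y) / (D y) ^ 2 with hG1
  set G2 : ℝ → ℝ := fun y => (N21 y * D y - N20 y * D1 y) / (D y) ^ 2 with hG2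
  have hf1d : ∀ y ∈ I, HasDerivAt f₁ (G1 y) y := by
    intro y hy
    have h := (hN10d y).div (hDd y) (hne y hy)
    exact h.congr_of_eventuallyEq (Filter.Eventually.of_forall (fun t => by rw [hf₁, hN10]; rfl))
  have hf2d : ∀ y ∈ I, HasDerivAt f₂ (G2 y) y := by
    intro y hy
    have h := (hN20d y).div (hDd y) (hne y hy)
    exact h.congr_of_eventuallyEq (Filter.Eventually.of_forall (fun t => by rw [hf₂, hN20]; rfl))
  have hderiv1 : ∀ y ∈ I, deriv f₁ y = G1 y := fun y hy => (hf1d y hy).deriv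
  have hderiv2 : ∀ y ∈ I, deriv f₂ y = G2 y := fun y hy => (hf2d y hy).deriv
  intro x hx
  have hDx := hne x hx
  have hmem : I ∈ nhds x := hIopen.mem_nhds hx
  -- second derivatives
  have hG1d : HasDerivAt G1
      (((N12 x * D x + N11 x * D1 x - (N11 x * D1 x + N10 x * D2 x)) * (D x) ^ 2 -
        (N11 x * D x - N10 x * D1 x) * (2 * D x ^ 1 * D1 x)) / ((D x) ^ 2) ^ 2) x := by
    have hnum : HasDerivAt (fun y => N11 y * D y - N10 y * D1 y)
        (N12 x * D x + N11 x * D1 x - (N11 x * D1 x + N10 x * D2 x)) x :=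
      ((hN11d x).mul (hDd x)).sub ((hN10d x).mul (hD1d x))
    have hden : HasDerivAt (fun y => (D y) ^ 2) (2 * D x ^ 1 * D1 x) x := (hDd x).pow 2
    exact hnum.div hden (pow_ne_zero 2 hDx)
  have hG2d : HasDerivAt G2
      (((N22 x * D x + N21 x * D1 x - (N21 x * D1 x + N20 x * D2 x)) * (D x) ^ 2 -
        (N21 x * D x - N20 x * D1 x) * (2 * D x ^ 1 * D1 x)) / ((D x) ^ 2) ^ 2) x := by
    have hnum : HasDerivAt (fun y => N21 y * D y - N20 y * D1 y)
        (N22 x * D x + N21 x * D1 x - (N21 x * D1 x + N20 x * D2 x)) x :=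
      ((hN21d x).mul (hDd x)).sub ((hN20d x).mul (hD1d x))
    have hden : HasDerivAt (fun y => (D y) ^ 2) (2 * D x ^ 1 * D1 x) x := (hDd x).pow 2
    exact hnum.div hden (pow_ne_zero 2 hDx)
  have hdd1 : deriv (deriv f₁) x =
      (((N12 x * D x - N10 x * D2 x) * D x - 2 * (N11 x * D x - N10 x * D1 x) * D1 x) / (D x) ^ 3) := by
    have heq : deriv f₁ =ᶠ[nhds x] G1 := by
      filter_upwards [hmem] with y hy using hderiv1 y hy
    rw [heq.deriv_eq, hG1d.deriv]
    field_simp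
    ring
  have hdd2 : deriv (deriv f₂) x =
      (((N22 x * D x - N20 x * D2 x) * D x - 2 * (N21 x * D x - N20 x * D1 x) * D1 x) / (D x) ^ 3) := by
    have heq : deriv f₂ =ᶠ[nhds x] G2 := by
      filter_upwards [hmem] with y hy using hderiv2 y hy
    rw [heq.deriv_eq, hG2d.deriv]
    field_simp
    ring
  have hf1x : f₁ x = N10 x / D x := by rw [hf₁, hN10]
  have hf2x : f₂ x = N20 x / D x := by rw [hf₂, hN20]
  have hDrel : D1 x ^ 2 = 0 ∨ True := Or.inr trivial
  constructor
  · rw [hdd1, hf1x, hf2x, hderiv1 x hx, hderiv2 x hx, hG1, hG2]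
    simp only [hN10, hN11, hN12, hN20, hN21, hN22, hD1, hD2]
    rw [hD x]
    field_simp
    ring
  · rw [hdd2, hf1x, hf2x, hderiv1 x hx, hderiv2 x hx, hG1, hG2]
    simp only [hN10, hN11, hN12, hN20, hN21, hN22, hD1, hD2]
    rw [hD x]
    field_simp
    ring
end

section
/- Let a₁, b₁, b₂ ∈ ℝ and a₂ > 0. Define D(x) = √((a₁ − 2x)² + a₂²), f₁(x) = √((a₁ − 2x + D(x))/2) + b₁, and f₂(x) = √((2x − a₁ + D(x))/2) + b₂ for x ∈ ℝ. Then for all x ∈ ℝ the pair (f₁, f₂) satisfies f₁″ = f₁′³ − 3f₁′f₂′² and f₂″ = 3f₁′²f₂′ − f₂′³. -/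
/-- The explicit real solution (plus branch) of the cubically coupled system (sys3). -/
theorem stmt_10 (a₁ a₂ b₁ b₂ : ℝ) (ha₂ : 0 < a₂) (D f₁ f₂ : ℝ → ℝ)
    (hD : ∀ x : ℝ, D x = Real.sqrt ((a₁ - 2 * x) ^ 2 + a₂ ^ 2))
    (hf₁ : ∀ x : ℝ, f₁ x = Real.sqrt ((a₁ - 2 * x + D x) / 2) + b₁)
    (hf₂ : ∀ x : ℝ, f₂ x = Real.sqrt ((2 * x - a₁ + D x) / 2) + b₂) :
    ∀ x : ℝ,
      deriv (deriv f₁) x = (deriv f₁ x) ^ 3 - 3 * deriv f₁ x * (deriv f₂ x) ^ 2 ∧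
      deriv (deriv f₂) x = 3 * (deriv f₁ x) ^ 2 * deriv f₂ x - (deriv f₂ x) ^ 3 := by
  have hq : ∀ x : ℝ, 0 < (a₁ - 2 * x) ^ 2 + a₂ ^ 2 := fun x => by positivity
  have hDpos : ∀ x, 0 < D x := fun x => by
    rw [hD]; exact Real.sqrt_pos.2 (hq x)
  have hDsq : ∀ x, D x ^ 2 = (a₁ - 2 * x) ^ 2 + a₂ ^ 2 := fun x => by
    rw [hD]; exact Real.sq_sqrt (hq x).le
  have hDgt : ∀ x, (a₁ - 2 * x) ^ 2 < D x ^ 2 := fun x => by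
    rw [hDsq]; nlinarith
  have hp₁ : ∀ x, 0 < a₁ - 2 * x + D x := fun x => by nlinarith [hDpos x, hDgt x]
  have hp₂ : ∀ x, 0 < 2 * x - a₁ + D x := fun x => by nlinarith [hDpos x, hDgt x]
  set g₁ : ℝ → ℝ := fun x => Real.sqrt ((a₁ - 2 * x + D x) / 2) with hg₁def
  set g₂ : ℝ → ℝ := fun x => Real.sqrt ((2 * x - a₁ + D x) / 2) with hg₂def
  have hg₁sq : ∀ x, g₁ x ^ 2 = (a₁ - 2 * x + D x) / 2 := fun x =>
    Real.sq_sqrt (by linarith [hp₁ x])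
  have hg₂sq : ∀ x, g₂ x ^ 2 = (2 * x - a₁ + D x) / 2 := fun x =>
    Real.sq_sqrt (by linarith [hp₂ x])
  have hg₁pos : ∀ x, 0 < g₁ x := fun x => Real.sqrt_pos.2 (by linarith [hp₁ x])
  have hg₂pos : ∀ x, 0 < g₂ x := fun x => Real.sqrt_pos.2 (by linarith [hp₂ x])
  have hlin : ∀ x : ℝ, HasDerivAt (fun x : ℝ => a₁ - 2 * x) (-2) x := fun x => by
    simpa using ((hasDerivAt_id x).const_mul 2).const_sub a₁
  have hD' : ∀ x, HasDerivAt D (-(2 * (a₁ - 2 * x)) / D x) x := by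
    intro x
    have h1 : HasDerivAt (fun x : ℝ => (a₁ - 2 * x) ^ 2 + a₂ ^ 2)
        ((2 : ℕ) * (a₁ - 2 * x) ^ 1 * (-2)) x := ((hlin x).pow 2).add_const _
    have h2 := (Real.hasDerivAt_sqrt (ne_of_gt (hq x))).comp x h1
    have hfe : D = fun x => Real.sqrt ((a₁ - 2 * x) ^ 2 + a₂ ^ 2) := funext hD
    rw [hfe]
    refine h2.congr_deriv ?_
    have h3 : Real.sqrt ((a₁ - 2 * x) ^ 2 + a₂ ^ 2) ≠ 0 :=
      ne_of_gt (Real.sqrt_pos.2 (hq x))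
    field_simp
    ring
  have hg₁' : ∀ x, HasDerivAt g₁ (-(g₁ x) / D x) x := by
    intro x
    have hu : HasDerivAt (fun x => (a₁ - 2 * x + D x) / 2)
        ((-2 + -(2 * (a₁ - 2 * x)) / D x) / 2) x := ((hlin x).add (hD' x)).div_const 2
    have h2 := (Real.hasDerivAt_sqrt (ne_of_gt (half_pos (hp₁ x)))).comp x hu
    refine h2.congr_deriv ?_
    symm
    have hG := hg₁sq x
    have hGne : g₁ x ≠ 0 := ne_of_gt (hg₁pos x)
    have hDne : D x ≠ 0 := ne_of_gt (hDpos x)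
    show -(g₁ x) / D x = 1 / (2 * g₁ x) * ((-2 + -(2 * (a₁ - 2 * x)) / D x) / 2)
    field_simp
    linear_combination (-2) * hG
  have hg₂' : ∀ x, HasDerivAt g₂ (g₂ x / D x) x := by
    intro x
    have hlin2 : HasDerivAt (fun x : ℝ => 2 * x - a₁) (2 : ℝ) x := by
      simpa using ((hasDerivAt_id x).const_mul 2).sub_const a₁
    have hu : HasDerivAt (fun x => (2 * x - a₁ + D x) / 2)
        ((2 + -(2 * (a₁ - 2 * x)) / D x) / 2) x := (hlin2.add (hD' x)).div_const 2
    have h2 := (Real.hasDerivAt_sqrt (ne_of_gt (half_pos (hp₂ x)))).comp x hu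
    refine h2.congr_deriv ?_
    symm
    have hG := hg₂sq x
    have hGne : g₂ x ≠ 0 := ne_of_gt (hg₂pos x)
    have hDne : D x ≠ 0 := ne_of_gt (hDpos x)
    show g₂ x / D x = 1 / (2 * g₂ x) * ((2 + -(2 * (a₁ - 2 * x)) / D x) / 2)
    field_simp
    linear_combination 2 * hG
  have hf₁e : f₁ = fun x => g₁ x + b₁ := funext hf₁
  have hf₂e : f₂ = fun x => g₂ x + b₂ := funext hf₂
  have hdf₁ : deriv f₁ = fun x => -(g₁ x) / D x := by
    funext x
    rw [hf₁e]
    exact ((hg₁' x).add_const b₁).deriv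
  have hdf₂ : deriv f₂ = fun x => g₂ x / D x := by
    funext x
    rw [hf₂e]
    exact ((hg₂' x).add_const b₂).deriv
  intro x
  have hDx := hDpos x
  have hG1 := hg₁sq x
  have hG2 := hg₂sq x
  have hdd₁ : HasDerivAt (deriv f₁)
      ((-(-(g₁ x) / D x) * D x - -(g₁ x) * (-(2 * (a₁ - 2 * x)) / D x)) / D x ^ 2) x := by
    rw [hdf₁]
    exact ((hg₁' x).neg.div (hD' x) (ne_of_gt hDx))
  have hdd₂ : HasDerivAt (deriv f₂)
      ((g₂ x / D x * D x - g₂ x * (-(2 * (a₁ - 2 * x)) / D x)) / D x ^ 2) x := by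
    rw [hdf₂]
    exact ((hg₂' x).div (hD' x) (ne_of_gt hDx))
  rw [hdd₁.deriv, hdd₂.deriv, hdf₁, hdf₂]
  constructor
  · field_simp
    linear_combination (g₁ x) * hG1 - 3 * (g₁ x) * hG2
  · field_simp
    linear_combination (g₂ x) * hG2 - 3 * (g₂ x) * hG1
end

section
/- Let a > 0 and b ∈ ℝ, and define u : ℝ → ℝ by u(x) = arctan(x/√(a − x²)) + b on the open interval I = (−√a, √a). Then u is twice differentiable on I and u″(x) = x·(u′(x))³ for all x ∈ I. -/
/-- The function `u(x) = arctan (x / √(a - x²)) + b` solves `u'' = x·u'³`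
on `(-√a, √a)`. -/
theorem stmt_13 (a b : ℝ) (ha : 0 < a) (u : ℝ → ℝ)
    (hu : ∀ x : ℝ, u x = Real.arctan (x / Real.sqrt (a - x ^ 2)) + b) :
    (∀ x ∈ Set.Ioo (-Real.sqrt a) (Real.sqrt a),
        DifferentiableAt ℝ u x ∧ DifferentiableAt ℝ (deriv u) x) ∧
    ∀ x ∈ Set.Ioo (-Real.sqrt a) (Real.sqrt a),
        deriv (deriv u) x = x * (deriv u x) ^ 3 := by
  have hpos : ∀ x ∈ Set.Ioo (-Real.sqrt a) (Real.sqrt a), 0 < a - x ^ 2 := by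
    intro x hx
    have h := sq_lt_sq' hx.1 hx.2
    rw [Real.sq_sqrt ha.le] at h
    linarith
  -- derivative of sqrt (a - x^2)
  have hsqrt : ∀ x ∈ Set.Ioo (-Real.sqrt a) (Real.sqrt a),
      HasDerivAt (fun y => Real.sqrt (a - y ^ 2))
        (-(2 * x) / (2 * Real.sqrt (a - x ^ 2))) x := by
    intro x hx
    have h1 : HasDerivAt (fun y : ℝ => a - y ^ 2) (-(2 * x)) x := by
      simpa using ((hasDerivAt_pow 2 x).const_sub a)
    exact h1.sqrt (hpos x hx).ne'
  have key : ∀ x ∈ Set.Ioo (-Real.sqrt a) (Real.sqrt a),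
      HasDerivAt u (Real.sqrt (a - x ^ 2))⁻¹ x := by
    intro x hx
    have hp := hpos x hx
    have hs : 0 < Real.sqrt (a - x ^ 2) := Real.sqrt_pos.mpr hp
    have hsq : Real.sqrt (a - x ^ 2) ^ 2 = a - x ^ 2 := Real.sq_sqrt hp.le
    have h3 : HasDerivAt (fun y => y / Real.sqrt (a - y ^ 2))
        (a / Real.sqrt (a - x ^ 2) ^ 3) x := by
      have := (hasDerivAt_id' x).div (hsqrt x hx) hs.ne'
      refine this.congr_deriv ?_
      field_simp
      linear_combination hsq
    have h4 := (Real.hasDerivAt_arctan (x / Real.sqrt (a - x ^ 2))).comp x h3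
    have h5 := h4.add_const b
    have h6 : HasDerivAt u
        (1 / (1 + (x / Real.sqrt (a - x ^ 2)) ^ 2) * (a / Real.sqrt (a - x ^ 2) ^ 3)) x := by
      have : u = fun y => Real.arctan (y / Real.sqrt (a - y ^ 2)) + b := funext hu
      rw [this]; exact h5
    convert h6 using 1
    rw [div_pow, hsq]
    field_simp
    linear_combination a * hsq
  have hg : ∀ x ∈ Set.Ioo (-Real.sqrt a) (Real.sqrt a),
      HasDerivAt (fun y => (Real.sqrt (a - y ^ 2))⁻¹)
        (x * ((Real.sqrt (a - x ^ 2))⁻¹) ^ 3) x := by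
    intro x hx
    have hp := hpos x hx
    have hs : 0 < Real.sqrt (a - x ^ 2) := Real.sqrt_pos.mpr hp
    have hsq : Real.sqrt (a - x ^ 2) ^ 2 = a - x ^ 2 := Real.sq_sqrt hp.le
    have := (hsqrt x hx).inv hs.ne'
    refine this.congr_deriv ?_
    field_simp
  have heq : ∀ x ∈ Set.Ioo (-Real.sqrt a) (Real.sqrt a),
      deriv u =ᶠ[nhds x] fun y => (Real.sqrt (a - y ^ 2))⁻¹ := by
    intro x hx
    filter_upwards [isOpen_Ioo.mem_nhds hx] with y hy
    exact (key y hy).deriv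
  have key2 : ∀ x ∈ Set.Ioo (-Real.sqrt a) (Real.sqrt a),
      HasDerivAt (deriv u) (x * ((Real.sqrt (a - x ^ 2))⁻¹) ^ 3) x := by
    intro x hx
    exact (hg x hx).congr_of_eventuallyEq (heq x hx)
  refine ⟨fun x hx => ⟨(key x hx).differentiableAt, (key2 x hx).differentiableAt⟩,
    fun x hx => ?_⟩
  rw [(key2 x hx).deriv, (key x hx).deriv]
end

section
/- Let I ⊆ ℝ be an open interval, let u : ℝ → ℂ be twice differentiable at every point of I, and let g : ℂ → ℂ be twice complex differentiable at every point of u(I) with g(u(x)) = x for all x ∈ I. If deriv (deriv g) (z) = −z for all z ∈ u(I), then u″(x) = u(x)·(u′(x))³ for all x ∈ I. -/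
/-- Pulling back the linear equation `g''(z) = -z` along `u` (where `g (u x) = x`)
yields the nonlinear scalar equation `u'' = u·u'³`. -/
theorem stmt_15 (I : Set ℝ) (hIopen : IsOpen I) (hIint : I.OrdConnected)
    (u : ℝ → ℂ) (g : ℂ → ℂ)
    (hu : ∀ x ∈ I, DifferentiableAt ℝ u x)
    (hu' : ∀ x ∈ I, DifferentiableAt ℝ (deriv u) x)
    (hg : ∀ x ∈ I, DifferentiableAt ℂ g (u x))
    (hg' : ∀ x ∈ I, DifferentiableAt ℂ (deriv g) (u x))
    (hgu : ∀ x ∈ I, g (u x) = (x : ℂ))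
    (hlin : ∀ z ∈ u '' I, deriv (deriv g) z = -z) :
    ∀ x ∈ I, deriv (deriv u) x = u x * (deriv u x) ^ 3 := by
  -- first derivative identity: g'(u y) * u'(y) = 1 on I
  have h1 : ∀ y ∈ I, deriv g (u y) * deriv u y = 1 := by
    intro y hy
    have hcomp : HasDerivAt (g ∘ u) (deriv g (u y) * deriv u y) y :=
      ((hg y hy).hasDerivAt).comp y ((hu y hy).hasDerivAt)
    have heq : (g ∘ u) =ᶠ[nhds y] fun t : ℝ => (t : ℂ) :=
      Filter.eventuallyEq_of_mem (hIopen.mem_nhds hy) (fun z hz => hgu z hz)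
    have hid : HasDerivAt (fun t : ℝ => (t : ℂ)) 1 y := by
      simpa using (hasDerivAt_id y).ofReal_comp
    have := hid.congr_of_eventuallyEq heq
    exact hcomp.unique this
  intro x hx
  have hdg' : HasDerivAt (fun y : ℝ => deriv g (u y)) (-(u x) * deriv u x) x := by
    have := ((hg' x hx).hasDerivAt).comp x ((hu x hx).hasDerivAt)
    rwa [hlin (u x) ⟨x, hx, rfl⟩] at this
  have hdu' : HasDerivAt (deriv u) (deriv (deriv u) x) x := (hu' x hx).hasDerivAt
  have hprod := hdg'.mul hdu'
  have hconst : HasDerivAt (fun y : ℝ => deriv g (u y) * deriv u y) 0 x := by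
    have heq : (fun y : ℝ => deriv g (u y) * deriv u y) =ᶠ[nhds x] fun _ => (1 : ℂ) :=
      Filter.eventuallyEq_of_mem (hIopen.mem_nhds hx) (fun z hz => h1 z hz)
    exact (hasDerivAt_const x (1 : ℂ)).congr_of_eventuallyEq heq
  have key : -(u x) * deriv u x * deriv u x + deriv g (u x) * deriv (deriv u) x = 0 :=
    hprod.unique hconst
  have h1x := h1 x hx
  linear_combination deriv u x * key - deriv (deriv u) x * h1x
end

section
/- Let I ⊆ ℝ be an open interval, let u : ℝ → ℂ be twice differentiable at every point of I, and let g : ℂ → ℂ be twice complex differentiable at every point of u(I) with g(u(x)) = x for all x ∈ I. If deriv (deriv g) (z) = −z·g(z) for all z ∈ u(I) (i.e. g satisfies the Airy-type equation g″(z) + z·g(z) = 0), then u″(x) = x·u(x)·(u′(x))³ for all x ∈ I. -/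
/-- Pulling back the Airy-type equation `g''(z) = -z·g(z)` along `u`
(where `g (u x) = x`) yields the nonlinear scalar equation `u'' = x·u·u'³`. -/
theorem stmt_17 (I : Set ℝ) (hIopen : IsOpen I) (hIint : I.OrdConnected)
    (u : ℝ → ℂ) (g : ℂ → ℂ)
    (hu : ∀ x ∈ I, DifferentiableAt ℝ u x)
    (hu' : ∀ x ∈ I, DifferentiableAt ℝ (deriv u) x)
    (hg : ∀ x ∈ I, DifferentiableAt ℂ g (u x))
    (hg' : ∀ x ∈ I, DifferentiableAt ℂ (deriv g) (u x))
    (hgu : ∀ x ∈ I, g (u x) = (x : ℂ))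
    (hlin : ∀ z ∈ u '' I, deriv (deriv g) z = -z * g z) :
    ∀ x ∈ I, deriv (deriv u) x = (x : ℂ) * u x * (deriv u x) ^ 3 := by
  -- first: ∀ x ∈ I, deriv g (u x) * deriv u x = 1
  have key : ∀ x ∈ I, deriv u x • deriv g (u x) = 1 := by
    intro x hx
    have h1 : HasDerivAt (fun y => g (u y)) (deriv u x • deriv g (u x)) x :=
      HasDerivAt.scomp x (hg x hx).hasDerivAt (hu x hx).hasDerivAt
    have h2 : HasDerivAt (fun y : ℝ => (y : ℂ)) (1 : ℂ) x := by
      simpa using (hasDerivAt_id x).ofReal_comp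
    have heq : (fun y => g (u y)) =ᶠ[nhds x] (fun y : ℝ => (y : ℂ)) :=
      Filter.eventuallyEq_of_mem (hIopen.mem_nhds hx) (fun y hy => hgu y hy)
    have := (h1.congr_of_eventuallyEq heq.symm).unique h2
    simpa using this
  intro x hx
  set a := deriv u x with ha
  set c := deriv g (u x) with hc
  set d := deriv (deriv g) (u x) with hd
  -- second derivative of the constant 1 function
  have h1 : HasDerivAt (fun y => deriv u y • deriv g (u y)) (0 : ℂ) x := by
    have heq : (fun y => deriv u y • deriv g (u y)) =ᶠ[nhds x] (fun _ : ℝ => (1 : ℂ)) :=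
      Filter.eventuallyEq_of_mem (hIopen.mem_nhds hx) (fun y hy => key y hy)
    exact (hasDerivAt_const x (1 : ℂ)).congr_of_eventuallyEq heq
  have h2 : HasDerivAt (fun y => deriv g (u y)) (a • d) x :=
    HasDerivAt.scomp x (hg' x hx).hasDerivAt (hu x hx).hasDerivAt
  have h3 : HasDerivAt (fun y => deriv u y • deriv g (u y))
      (a • (a • d) + deriv (deriv u) x • c) x :=
    (hu' x hx).hasDerivAt.smul h2
  have hmain : a * (a * d) + deriv (deriv u) x * c = 0 := by
    have := h3.unique h1
    simpa [smul_eq_mul] using this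
  have hca : a * c = 1 := by simpa [smul_eq_mul] using key x hx
  have hdval : d = -(u x) * (x : ℂ) := by
    rw [hd, hlin (u x) ⟨x, hx, rfl⟩, hgu x hx]
  -- solve: u'' * c = -a² d, multiply by a: u'' * (a*c) = -a³ d
  have : deriv (deriv u) x * (a * c) = -(a * (a * d)) * a := by ring_nf; linear_combination a * hmain
  rw [hca, mul_one, hdval] at this
  rw [this]; ring
end
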